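/- Let q ∈ ℂ with |q| = 1, and let Δ_1, Δ_2 be disjoint measurable subsets of an ordered measure space T with σ(Δ_1) = a > 0, σ(Δ_2) = b > 0, such that every point of Δ_1 is less than every point of Δ_2. Set Q(s,t) = q for s < t, Q(s,t) = q̄ for s > t, and g(t) = (b/a) q̄ χ_{Δ_1}(t) + χ_{Δ_2}(t). Then ∫∫ Q(s,t) g(s) conj(g(t)) dσ(s) dσ(t) = 2b²(Re(q) + 1). Consequently, the anyonic kernel Q is negative semidefinite if and only if q = -1. -/

import Mathlib

open MeasureTheory

lemma anyon_half_measure {T : Type*} [LinearOrder T] [MeasurableSpace T]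
    (σ : Measure T) [SigmaFinite σ]
    (hord : MeasurableSet {p : T × T | p.1 < p.2})
    (hdiag : (σ.prod σ) {p : T × T | p.1 = p.2} = 0)
    (Δ : Set T) (h : MeasurableSet Δ) (m : ℝ) (hm : 0 ≤ m)
    (hσ : σ Δ = ENNReal.ofReal m) :
    (σ.prod σ) ((Δ ×ˢ Δ) ∩ {p : T × T | p.1 < p.2}) = ENNReal.ofReal (m ^ 2 / 2) ∧
    (σ.prod σ) ((Δ ×ˢ Δ) ∩ {p : T × T | p.2 < p.1}) = ENNReal.ofReal (m ^ 2 / 2) := by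
  set μ := σ.prod σ
  have hgt : MeasurableSet {p : T × T | p.2 < p.1} := measurable_swap hord
  set L := (Δ ×ˢ Δ) ∩ {p : T × T | p.1 < p.2} with hL
  set G := (Δ ×ˢ Δ) ∩ {p : T × T | p.2 < p.1} with hG
  have hLm : MeasurableSet L := (h.prod h).inter hord
  have hGm : MeasurableSet G := (h.prod h).inter hgt
  -- swap symmetry : μ G = μ L
  have hswap : μ G = μ L := by
    have h1 : Prod.swap ⁻¹' L = G := by
      ext p; simp [hL, hG, Set.mem_prod, and_comm]
    calc μ G = (Measure.map Prod.swap μ) L := by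
          rw [Measure.map_apply measurable_swap hLm, h1]
      _ = μ L := by rw [Measure.prod_swap]
  -- totals
  have hDiagNull : μ ((Δ ×ˢ Δ) ∩ {p : T × T | p.1 = p.2}) = 0 :=
    measure_mono_null Set.inter_subset_right hdiag
  have hcover : (Δ ×ˢ Δ) ⊆ L ∪ G ∪ ((Δ ×ˢ Δ) ∩ {p : T × T | p.1 = p.2}) := by
    intro p hp
    rcases lt_trichotomy p.1 p.2 with hc | hc | hc
    · exact Or.inl (Or.inl ⟨hp, hc⟩)
    · exact Or.inr ⟨hp, hc⟩
    · exact Or.inl (Or.inr ⟨hp, hc⟩)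
  have hdisjLG : Disjoint L G := by
    apply Set.disjoint_left.mpr
    rintro p ⟨_, h1⟩ ⟨_, h2⟩
    exact absurd h2 (not_lt.mpr h1.le)
  have htot : μ (Δ ×ˢ Δ) = μ L + μ G := by
    have h1 : μ (Δ ×ˢ Δ) ≤ μ L + μ G := by
      calc μ (Δ ×ˢ Δ) ≤ μ (L ∪ G ∪ ((Δ ×ˢ Δ) ∩ {p : T × T | p.1 = p.2})) :=
            measure_mono hcover
        _ ≤ μ (L ∪ G) + μ ((Δ ×ˢ Δ) ∩ {p : T × T | p.1 = p.2}) := measure_union_le _ _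
        _ = μ (L ∪ G) := by rw [hDiagNull, add_zero]
        _ ≤ μ L + μ G := measure_union_le _ _
    have h2 : μ L + μ G ≤ μ (Δ ×ˢ Δ) := by
      rw [← measure_union hdisjLG hGm]
      exact measure_mono (Set.union_subset Set.inter_subset_left Set.inter_subset_left)
    exact le_antisymm h1 h2
  have hprod : μ (Δ ×ˢ Δ) = ENNReal.ofReal (m ^ 2) := by
    rw [Measure.prod_prod, hσ, ← ENNReal.ofReal_mul hm, sq]
  have hkey : μ L = ENNReal.ofReal (m ^ 2 / 2) := by
    have h2 : 2 * μ L = 2 * ENNReal.ofReal (m ^ 2 / 2) := by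
      rw [two_mul, two_mul, ← ENNReal.ofReal_add (by positivity) (by positivity)]
      rw [hswap] at htot
      rw [← htot, hprod]
      norm_num
    exact (ENNReal.mul_right_inj (by norm_num) (by norm_num)).mp h2
  exact ⟨hkey, hswap.trans hkey⟩
set_option maxHeartbeats 1000000

/-- for the anyonic kernel `Q` (with `|q| = 1`) and disjoint sets
`Δ_1 < Δ_2` of measures `a, b > 0`, the test function
`g = (b/a) q̄ χ_{Δ_1} + χ_{Δ_2}` gives
`∫∫ Q(s,t) g(s) conj(g(t)) dσ dσ = 2b²(Re q + 1)`; consequently `Q` is negative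
semidefinite iff `q = -1`. -/
theorem anyon_negative_semidefinite_iff {T : Type*} [LinearOrder T] [MeasurableSpace T]
    (σ : Measure T) [SigmaFinite σ]
    (hord : MeasurableSet {p : T × T | p.1 < p.2})
    (hdiag : (σ.prod σ) {p : T × T | p.1 = p.2} = 0)
    (q : ℂ) (hq : ‖q‖ = 1)
    (Δ1 Δ2 : Set T) (h1 : MeasurableSet Δ1) (h2 : MeasurableSet Δ2)
    (hdisj : Disjoint Δ1 Δ2)
    (hlt : ∀ s ∈ Δ1, ∀ t ∈ Δ2, s < t)
    (a b : ℝ) (ha : 0 < a) (hb : 0 < b)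
    (hσ1 : σ Δ1 = ENNReal.ofReal a) (hσ2 : σ Δ2 = ENNReal.ofReal b)
    (Q : T → T → ℂ) (hQ : ∀ s t, Q s t = if s < t then q else (starRingEnd ℂ) q)
    (g : T → ℂ)
    (hg : g = fun t => (b / a : ℂ) * (starRingEnd ℂ) q * Set.indicator Δ1 (fun _ => (1 : ℂ)) t
      + Set.indicator Δ2 (fun _ => (1 : ℂ)) t) :
    (∫ p, Q p.1 p.2 * g p.1 * (starRingEnd ℂ) (g p.2) ∂(σ.prod σ))
        = ((2 * b ^ 2 * (q.re + 1) : ℝ) : ℂ) ∧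
    ((∀ f : T → ℂ,
        Integrable (fun p => Q p.1 p.2 * f p.1 * (starRingEnd ℂ) (f p.2)) (σ.prod σ) →
        (∫ p, Q p.1 p.2 * f p.1 * (starRingEnd ℂ) (f p.2) ∂(σ.prod σ)).re ≤ 0)
      ↔ q = -1) := by
  have ha' : (a : ℂ) ≠ 0 := Complex.ofReal_ne_zero.mpr ha.ne'
  have hqq : q * (starRingEnd ℂ) q = 1 := by
    rw [Complex.mul_conj, Complex.normSq_eq_norm_sq, hq]; norm_num
  set μ := σ.prod σ with hμ
  have hgt : MeasurableSet {p : T × T | p.2 < p.1} := measurable_swap hord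
  set L1 := (Δ1 ×ˢ Δ1) ∩ {p : T × T | p.1 < p.2} with hL1def
  set G1 := (Δ1 ×ˢ Δ1) ∩ {p : T × T | p.2 < p.1} with hG1def
  set L2 := (Δ2 ×ˢ Δ2) ∩ {p : T × T | p.1 < p.2} with hL2def
  set G2 := (Δ2 ×ˢ Δ2) ∩ {p : T × T | p.2 < p.1} with hG2def
  obtain ⟨hmL1, hmG1⟩ := anyon_half_measure σ hord hdiag Δ1 h1 a ha.le hσ1
  obtain ⟨hmL2, hmG2⟩ := anyon_half_measure σ hord hdiag Δ2 h2 b hb.le hσ2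
  have hm12 : μ (Δ1 ×ˢ Δ2) = ENNReal.ofReal (a * b) := by
    rw [hμ, Measure.prod_prod, hσ1, hσ2, ENNReal.ofReal_mul ha.le]
  have hm21 : μ (Δ2 ×ˢ Δ1) = ENNReal.ofReal (b * a) := by
    rw [hμ, Measure.prod_prod, hσ1, hσ2, ENNReal.ofReal_mul hb.le, mul_comm]
  have hL1m : MeasurableSet L1 := (h1.prod h1).inter hord
  have hG1m : MeasurableSet G1 := (h1.prod h1).inter hgt
  have hL2m : MeasurableSet L2 := (h2.prod h2).inter hord
  have hG2m : MeasurableSet G2 := (h2.prod h2).inter hgt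
  have h12m : MeasurableSet (Δ1 ×ˢ Δ2) := h1.prod h2
  have h21m : MeasurableSet (Δ2 ×ˢ Δ1) := h2.prod h1
  set H : T × T → ℂ := fun p =>
    Set.indicator L1 (fun _ => q * ((b : ℂ) / a) ^ 2) p
    + Set.indicator G1 (fun _ => (starRingEnd ℂ) q * ((b : ℂ) / a) ^ 2) p
    + Set.indicator (Δ1 ×ˢ Δ2) (fun _ => ((b : ℂ) / a)) p
    + Set.indicator (Δ2 ×ˢ Δ1) (fun _ => ((b : ℂ) / a)) p
    + Set.indicator L2 (fun _ => q) p
    + Set.indicator G2 (fun _ => (starRingEnd ℂ) q) p with hHdef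
  have mkInt : ∀ (S : Set (T × T)) (c : ℂ), MeasurableSet S → μ S < ⊤ →
      Integrable (Set.indicator S (fun _ => c)) μ := by
    intro S c hS hfin
    exact (integrable_indicator_iff hS).mpr (integrableOn_const hfin.ne)
  have hiL1 := mkInt L1 (q * ((b : ℂ) / a) ^ 2) hL1m (by rw [hmL1]; exact ENNReal.ofReal_lt_top)
  have hiG1 := mkInt G1 ((starRingEnd ℂ) q * ((b : ℂ) / a) ^ 2) hG1m
    (by rw [hmG1]; exact ENNReal.ofReal_lt_top)
  have hi12 := mkInt (Δ1 ×ˢ Δ2) ((b : ℂ) / a) h12m (by rw [hm12]; exact ENNReal.ofReal_lt_top)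
  have hi21 := mkInt (Δ2 ×ˢ Δ1) ((b : ℂ) / a) h21m (by rw [hm21]; exact ENNReal.ofReal_lt_top)
  have hiL2 := mkInt L2 q hL2m (by rw [hmL2]; exact ENNReal.ofReal_lt_top)
  have hiG2 := mkInt G2 ((starRingEnd ℂ) q) hG2m (by rw [hmG2]; exact ENNReal.ofReal_lt_top)
  have hiH : Integrable H μ :=
    ((((hiL1.add hiG1).add hi12).add hi21).add hiL2).add hiG2
  have hne : ∀ᵐ p ∂μ, p.1 ≠ p.2 := by
    rw [ae_iff]
    simpa using hdiag
  have hd := Set.disjoint_left.mp hdisj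
  have haeq : (fun p : T × T => Q p.1 p.2 * g p.1 * (starRingEnd ℂ) (g p.2)) =ᵐ[μ] H := by
    filter_upwards [hne] with p hp
    by_cases hs1 : p.1 ∈ Δ1 <;> by_cases ht1 : p.2 ∈ Δ1 <;>
      by_cases hs2 : p.1 ∈ Δ2 <;> by_cases ht2 : p.2 ∈ Δ2
    · exact absurd hs2 (hd hs1)
    · exact absurd hs2 (hd hs1)
    · exact absurd ht2 (hd ht1)
    · -- s ∈ Δ1, t ∈ Δ1
      rcases lt_trichotomy p.1 p.2 with hc | hc | hc
      · simp [hHdef, hL1def, hG1def, hL2def, hG2def, hQ, hg, Set.indicator_apply,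
          Set.mem_prod, Set.mem_setOf_eq, Set.mem_inter_iff, hs1, ht1, hs2, ht2, hc, hc.asymm,
          map_div₀, Complex.conj_ofReal]
        try linear_combination ((b : ℂ) / a) ^ 2 * q * hqq
      · exact absurd hc hp
      · simp [hHdef, hL1def, hG1def, hL2def, hG2def, hQ, hg, Set.indicator_apply,
          Set.mem_prod, Set.mem_setOf_eq, Set.mem_inter_iff, hs1, ht1, hs2, ht2, hc, hc.asymm,
          hc.not_gt, map_div₀, Complex.conj_ofReal]
        try linear_combination ((b : ℂ) / a) ^ 2 * (starRingEnd ℂ) q * hqq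
    · exact absurd hs2 (hd hs1)
    · exact absurd hs2 (hd hs1)
    · -- s ∈ Δ1, t ∈ Δ2
      have hc := hlt _ hs1 _ ht2
      simp [hHdef, hL1def, hG1def, hL2def, hG2def, hQ, hg, Set.indicator_apply,
        Set.mem_prod, Set.mem_setOf_eq, Set.mem_inter_iff, hs1, ht1, hs2, ht2, hc, hc.asymm,
        map_div₀, Complex.conj_ofReal]
      try linear_combination ((b : ℂ) / a) * hqq
    · simp [hHdef, hL1def, hG1def, hL2def, hG2def, hQ, hg, Set.indicator_apply,
        Set.mem_prod, Set.mem_setOf_eq, Set.mem_inter_iff, hs1, ht1, hs2, ht2]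
    · exact absurd ht2 (hd ht1)
    · -- s ∈ Δ2, t ∈ Δ1
      have hc := hlt _ ht1 _ hs2
      simp [hHdef, hL1def, hG1def, hL2def, hG2def, hQ, hg, Set.indicator_apply,
        Set.mem_prod, Set.mem_setOf_eq, Set.mem_inter_iff, hs1, ht1, hs2, ht2, hc, hc.asymm,
        hc.not_gt, map_div₀, Complex.conj_ofReal]
      try linear_combination ((b : ℂ) / a) * hqq
    · exact absurd ht2 (hd ht1)
    · simp [hHdef, hL1def, hG1def, hL2def, hG2def, hQ, hg, Set.indicator_apply,
        Set.mem_prod, Set.mem_setOf_eq, Set.mem_inter_iff, hs1, ht1, hs2, ht2]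
    · -- s ∈ Δ2, t ∈ Δ2
      rcases lt_trichotomy p.1 p.2 with hc | hc | hc
      · simp [hHdef, hL1def, hG1def, hL2def, hG2def, hQ, hg, Set.indicator_apply,
          Set.mem_prod, Set.mem_setOf_eq, Set.mem_inter_iff, hs1, ht1, hs2, ht2, hc, hc.asymm,
          map_div₀, Complex.conj_ofReal]
        try ring
      · exact absurd hc hp
      · simp [hHdef, hL1def, hG1def, hL2def, hG2def, hQ, hg, Set.indicator_apply,
          Set.mem_prod, Set.mem_setOf_eq, Set.mem_inter_iff, hs1, ht1, hs2, ht2, hc, hc.asymm,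
          hc.not_gt, map_div₀, Complex.conj_ofReal]
        try ring
    · simp [hHdef, hL1def, hG1def, hL2def, hG2def, hQ, hg, Set.indicator_apply,
        Set.mem_prod, Set.mem_setOf_eq, Set.mem_inter_iff, hs1, ht1, hs2, ht2]
    · simp [hHdef, hL1def, hG1def, hL2def, hG2def, hQ, hg, Set.indicator_apply,
        Set.mem_prod, Set.mem_setOf_eq, Set.mem_inter_iff, hs1, ht1, hs2, ht2]
    · simp [hHdef, hL1def, hG1def, hL2def, hG2def, hQ, hg, Set.indicator_apply,
        Set.mem_prod, Set.mem_setOf_eq, Set.mem_inter_iff, hs1, ht1, hs2, ht2]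
  have hval : (∫ p, Q p.1 p.2 * g p.1 * (starRingEnd ℂ) (g p.2) ∂μ)
      = ((2 * b ^ 2 * (q.re + 1) : ℝ) : ℂ) := by
    have hiS2 : Integrable (fun p : T × T =>
        Set.indicator L1 (fun _ => q * ((b : ℂ) / a) ^ 2) p
        + Set.indicator G1 (fun _ => (starRingEnd ℂ) q * ((b : ℂ) / a) ^ 2) p) μ :=
      hiL1.add hiG1
    have hiS3 : Integrable (fun p : T × T =>
        Set.indicator L1 (fun _ => q * ((b : ℂ) / a) ^ 2) p
        + Set.indicator G1 (fun _ => (starRingEnd ℂ) q * ((b : ℂ) / a) ^ 2) p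
        + Set.indicator (Δ1 ×ˢ Δ2) (fun _ => ((b : ℂ) / a)) p) μ :=
      hiS2.add hi12
    have hiS4 : Integrable (fun p : T × T =>
        Set.indicator L1 (fun _ => q * ((b : ℂ) / a) ^ 2) p
        + Set.indicator G1 (fun _ => (starRingEnd ℂ) q * ((b : ℂ) / a) ^ 2) p
        + Set.indicator (Δ1 ×ˢ Δ2) (fun _ => ((b : ℂ) / a)) p
        + Set.indicator (Δ2 ×ˢ Δ1) (fun _ => ((b : ℂ) / a)) p) μ :=
      hiS3.add hi21
    have hiS5 : Integrable (fun p : T × T =>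
        Set.indicator L1 (fun _ => q * ((b : ℂ) / a) ^ 2) p
        + Set.indicator G1 (fun _ => (starRingEnd ℂ) q * ((b : ℂ) / a) ^ 2) p
        + Set.indicator (Δ1 ×ˢ Δ2) (fun _ => ((b : ℂ) / a)) p
        + Set.indicator (Δ2 ×ˢ Δ1) (fun _ => ((b : ℂ) / a)) p
        + Set.indicator L2 (fun _ => q) p) μ :=
      hiS4.add hiL2
    rw [integral_congr_ae haeq, hHdef]
    rw [integral_add hiS5 hiG2,
      integral_add hiS4 hiL2,
      integral_add hiS3 hi21,
      integral_add hiS2 hi12,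
      integral_add hiL1 hiG1]
    rw [integral_indicator_const _ hL1m, integral_indicator_const _ hG1m,
      integral_indicator_const _ h12m, integral_indicator_const _ h21m,
      integral_indicator_const _ hL2m, integral_indicator_const _ hG2m]
    simp only [measureReal_def]
    rw [hmL1, hmG1, hm12, hm21, hmL2, hmG2]
    rw [ENNReal.toReal_ofReal (show (0:ℝ) ≤ a ^ 2 / 2 by positivity),
      ENNReal.toReal_ofReal (show (0:ℝ) ≤ a * b by positivity),
      ENNReal.toReal_ofReal (show (0:ℝ) ≤ b * a by positivity),
      ENNReal.toReal_ofReal (show (0:ℝ) ≤ b ^ 2 / 2 by positivity)]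
    have hcq : (starRingEnd ℂ) q = 2 * (q.re : ℂ) - q := by
      have h := Complex.add_conj q
      push_cast at h
      linear_combination h
    have e1 : ((a ^ 2 / 2 : ℝ)) • (q * ((b : ℂ) / a) ^ 2) = ((b : ℂ) ^ 2 / 2) * q := by
      rw [Complex.real_smul]
      push_cast
      field_simp
    have e2 : ((a ^ 2 / 2 : ℝ)) • ((starRingEnd ℂ) q * ((b : ℂ) / a) ^ 2)
        = ((b : ℂ) ^ 2 / 2) * (starRingEnd ℂ) q := by
      rw [Complex.real_smul]
      push_cast
      field_simp
    have e3 : ((a * b : ℝ)) • ((b : ℂ) / a) = (b : ℂ) ^ 2 := by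
      rw [Complex.real_smul]
      push_cast
      field_simp
    have e4 : ((b * a : ℝ)) • ((b : ℂ) / a) = (b : ℂ) ^ 2 := by
      rw [Complex.real_smul]
      push_cast
      field_simp
    rw [e1, e2, e3, e4, hcq]
    simp only [Complex.real_smul]
    push_cast
    ring
  refine ⟨hval, ?_, ?_⟩
  · intro hns
    have hFint : Integrable (fun p : T × T => Q p.1 p.2 * g p.1 * (starRingEnd ℂ) (g p.2)) μ :=
      hiH.congr haeq.symm
    have hle := hns g hFint
    rw [hval, Complex.ofReal_re] at hle
    have hre_le : q.re ≤ -1 := by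
      by_contra hcon
      push_neg at hcon
      nlinarith [mul_pos (show (0:ℝ) < 2 * b ^ 2 by positivity)
        (show (0:ℝ) < q.re + 1 by linarith)]
    have hre_ge : -1 ≤ q.re := by
      have h2 : |q.re| ≤ 1 := by
        rw [← hq]; exact Complex.abs_re_le_norm q
      linarith [(abs_le.mp h2).1]
    have hre : q.re = -1 := le_antisymm hre_le hre_ge
    have him : q.im = 0 := by
      have h2 : q.re ^ 2 + q.im ^ 2 = 1 := by
        have h3 := Complex.sq_norm q
        rw [hq, Complex.normSq_apply] at h3
        nlinarith
      nlinarith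
    apply Complex.ext <;> simp [hre, him]
  · intro hq1 f hf
    have hQ' : ∀ s t : T, Q s t = -1 := by
      intro s t
      rw [hQ, hq1]
      simp
    have heq : (fun p : T × T => Q p.1 p.2 * f p.1 * (starRingEnd ℂ) (f p.2))
        = fun p : T × T => -(f p.1 * (starRingEnd ℂ) (f p.2)) := by
      funext p
      rw [hQ']
      ring
    rw [heq] at hf ⊢
    rw [hμ] at hf ⊢
    rw [integral_prod _ hf]
    have hinner : ∀ x : T, (∫ y, -(f x * (starRingEnd ℂ) (f y)) ∂σ)
        = -(f x * (starRingEnd ℂ) (∫ y, f y ∂σ)) := by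
      intro x
      rw [integral_neg, integral_const_mul, integral_conj]
    simp only [hinner]
    rw [integral_neg]
    have h4 : (∫ x, f x * (starRingEnd ℂ) (∫ y, f y ∂σ) ∂σ)
        = (∫ x, f x ∂σ) * (starRingEnd ℂ) (∫ y, f y ∂σ) := integral_mul_const _ _
    rw [h4, Complex.mul_conj]
    simp [Complex.normSq_nonneg]
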